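/- Let λ = (a_1,…,a_n) ∈ ℂ^n satisfy a_i − a_{i+1} ∈ ℤ_{>0} for 1 ≤ i ≤ n−2 and a_{n−1} ≻ a_n. Set (b_1,…,b_n) := s_1 s_2 ⋯ s_{n−1} * λ. Then b_n − a_{n−1} ∈ {0, 1}, and b_i − b_{i+1} ∈ ℤ_{>0} for all 2 ≤ i ≤ n−1. -/

import Mathlib

open Finset

/-- The 1-based `i`-th coordinate of a weight `λ ∈ ℂ^n` (0 if out of range). -/
def coord {n : ℕ} (lam : Fin n → ℂ) (i : ℕ) : ℂ :=
  if h : 1 ≤ i ∧ i ≤ n then lam ⟨i - 1, by omega⟩ else 0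

/-- The star action of the generator `s_i` (1 ≤ i ≤ n-1) on weights:
swap coordinates `i` and `i+1` if their sum is nonzero, otherwise replace
`(λ_i, λ_{i+1})` by `(λ_{i+1} - 1, λ_i + 1)`. -/
noncomputable def sStar {n : ℕ} (i : ℕ) (lam : Fin n → ℂ) : Fin n → ℂ := fun j =>
  if (j : ℕ) + 1 = i then
    (if coord lam i + coord lam (i + 1) = 0 then coord lam (i + 1) - 1 else coord lam (i + 1))
  else if (j : ℕ) = i then
    (if coord lam i + coord lam (i + 1) = 0 then coord lam i + 1 else coord lam i)
  else lam j

/-- The partial order on weights: `μ ≤ ν` iff each partial sum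
`Σ_{j=1}^i (ν_j - μ_j)` (1 ≤ i ≤ n-1) is a nonnegative integer and the
total sum `Σ_{j=1}^n (ν_j - μ_j)` is zero. -/
def wle {n : ℕ} (mu nu : Fin n → ℂ) : Prop :=
  (∀ i : ℕ, 1 ≤ i → i ≤ n - 1 →
    ∃ m : ℕ, ∑ j ∈ Finset.Icc 1 i, (coord nu j - coord mu j) = (m : ℂ)) ∧
  ∑ j ∈ Finset.Icc 1 n, (coord nu j - coord mu j) = 0

/-- Strict inequality of weights. -/
def wlt {n : ℕ} (mu nu : Fin n → ℂ) : Prop := wle mu nu ∧ mu ≠ nu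

/-- `a ≻ b` iff `a - b ∈ ℤ_{>0}` or `a = b = 0`. -/
def csucc (a b : ℂ) : Prop := (∃ m : ℤ, 0 < m ∧ a - b = (m : ℂ)) ∨ (a = 0 ∧ b = 0)

/-- `starDesc j k λ = s_j s_{j+1} ⋯ s_k * λ` (apply `s_k` first, `s_j` last);
equals `λ` when `j > k`. -/
noncomputable def starDesc {n : ℕ} (j k : ℕ) (lam : Fin n → ℂ) : Fin n → ℂ :=
  (List.range' j (k + 1 - j)).foldr (fun i mu => sStar i mu) lam

/-- `starAsc j k λ = s_k s_{k-1} ⋯ s_j * λ` (apply `s_j` first, `s_k` last);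
equals `λ` when `j > k`. -/
noncomputable def starAsc {n : ℕ} (j k : ℕ) (lam : Fin n → ℂ) : Fin n → ℂ :=
  (List.range' j (k + 1 - j)).foldl (fun mu i => sStar i mu) lam

lemma coord_sStar_ne {n : ℕ} (i p : ℕ) (mu : Fin n → ℂ)
    (hp1 : p ≠ i) (hp2 : p ≠ i + 1) : coord (sStar i mu) p = coord mu p := by
  unfold coord
  split_ifs with h
  · show sStar i mu ⟨p - 1, by omega⟩ = mu ⟨p - 1, by omega⟩
    unfold sStar
    simp only
    rw [if_neg (by omega), if_neg (by omega)]
  · rfl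

lemma coord_sStar_self {n : ℕ} (i : ℕ) (mu : Fin n → ℂ) (h1 : 1 ≤ i) (h2 : i + 1 ≤ n) :
    coord (sStar i mu) i =
      if coord mu i + coord mu (i + 1) = 0 then coord mu (i + 1) - 1 else coord mu (i + 1) := by
  have e : coord (sStar i mu) i = sStar i mu ⟨i - 1, by omega⟩ := by
    rw [coord, dif_pos ⟨h1, by omega⟩]
  rw [e]
  unfold sStar
  simp only
  rw [if_pos]
  show (⟨i - 1, by omega⟩ : Fin n).val + 1 = i
  simp only
  omega

lemma coord_sStar_succ {n : ℕ} (i : ℕ) (mu : Fin n → ℂ) (h1 : 1 ≤ i) (h2 : i + 1 ≤ n) :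
    coord (sStar i mu) (i + 1) =
      if coord mu i + coord mu (i + 1) = 0 then coord mu i + 1 else coord mu i := by
  have e : coord (sStar i mu) (i + 1) = sStar i mu ⟨i + 1 - 1, by omega⟩ := by
    rw [coord, dif_pos ⟨by omega, by omega⟩]
  rw [e]
  unfold sStar
  simp only
  rw [if_neg (by omega), if_pos (by omega)]

lemma coord_foldr_untouched {n : ℕ} (len : ℕ) : ∀ (j p : ℕ) (lam : Fin n → ℂ),
    (p < j ∨ j + len + 1 ≤ p) →
    coord ((List.range' j len).foldr (fun i mu => sStar i mu) lam) p = coord lam p := by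
  induction len with
  | zero => intro j p lam _; rfl
  | succ m ih =>
    intro j p lam hp
    rw [List.range'_succ, List.foldr_cons]
    rw [coord_sStar_ne _ _ _ (by omega) (by omega)]
    exact ih (j + 1) p lam (by omega)

lemma starDesc_of_gt {n : ℕ} (j k : ℕ) (lam : Fin n → ℂ) (h : k + 1 ≤ j) :
    starDesc j k lam = lam := by
  unfold starDesc
  rw [Nat.sub_eq_zero_of_le h]
  rfl

lemma coord_starDesc_lt {n : ℕ} (j k p : ℕ) (lam : Fin n → ℂ) (h : p < j) :
    coord (starDesc j k lam) p = coord lam p :=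
  coord_foldr_untouched _ j p lam (Or.inl h)

lemma coord_starDesc_gt {n : ℕ} (j k p : ℕ) (lam : Fin n → ℂ) (h : k + 2 ≤ p) :
    coord (starDesc j k lam) p = coord lam p := by
  by_cases hjk : j ≤ k + 1
  · exact coord_foldr_untouched (k + 1 - j) j p lam (by omega)
  · rw [starDesc_of_gt j k lam (by omega)]

lemma starDesc_step {n : ℕ} (j k : ℕ) (lam : Fin n → ℂ) (h : j ≤ k) :
    starDesc j k lam = sStar j (starDesc (j + 1) k lam) := by
  unfold starDesc
  rw [(by omega : k + 1 - j = (k - j) + 1), List.range'_succ,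
    (by omega : k + 1 - (j + 1) = k - j)]
  rfl

lemma starDesc_split {n : ℕ} (j m k : ℕ) (lam : Fin n → ℂ) (hm : 1 ≤ m) (hjm : j ≤ m) (hmk : m ≤ k + 1) :
    starDesc j k lam = starDesc j (m - 1) (starDesc m k lam) := by
  unfold starDesc
  rw [← List.foldr_append]
  congr 1
  rw [(by omega : m - 1 + 1 - j = m - j)]
  have h2 := List.range'_append (s := j) (m := m - j) (n := k + 1 - m) (step := 1)
  rw [one_mul, (by omega : j + (m - j) = m),
    (by omega : m - j + (k + 1 - m) = k + 1 - j)] at h2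
  exact h2.symm

theorem stmt7 (n : ℕ) (hn : 2 ≤ n) (lam : Fin n → ℂ)
    (h1 : ∀ i, 1 ≤ i → i ≤ n - 2 → ∃ m : ℤ, 0 < m ∧ coord lam i - coord lam (i + 1) = (m : ℂ))
    (h2 : csucc (coord lam (n - 1)) (coord lam n)) :
    (coord (starDesc 1 (n - 1) lam) n - coord lam (n - 1) = 0 ∨
     coord (starDesc 1 (n - 1) lam) n - coord lam (n - 1) = 1) ∧
    (∀ i, 2 ≤ i → i ≤ n - 1 →
      ∃ m : ℤ, 0 < m ∧
        coord (starDesc 1 (n - 1) lam) i - coord (starDesc 1 (n - 1) lam) (i + 1) = (m : ℂ)) := by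
  -- X i = coord (starDesc i (n-1) lam) i is the "moving" value
  -- Recursions:
  have hR1 : ∀ i, 1 ≤ i → i ≤ n - 1 →
      coord (starDesc i (n - 1) lam) i =
        if coord lam i + coord (starDesc (i + 1) (n - 1) lam) (i + 1) = 0
        then coord (starDesc (i + 1) (n - 1) lam) (i + 1) - 1
        else coord (starDesc (i + 1) (n - 1) lam) (i + 1) := by
    intro i hi1 hi2
    rw [starDesc_step i (n - 1) lam (by omega),
      coord_sStar_self i _ hi1 (by omega),
      coord_starDesc_lt (i + 1) (n - 1) i lam (by omega)]
  have hR2 : ∀ i, 1 ≤ i → i ≤ n - 1 →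
      coord (starDesc i (n - 1) lam) (i + 1) =
        if coord lam i + coord (starDesc (i + 1) (n - 1) lam) (i + 1) = 0
        then coord lam i + 1 else coord lam i := by
    intro i hi1 hi2
    rw [starDesc_step i (n - 1) lam (by omega),
      coord_sStar_succ i _ hi1 (by omega),
      coord_starDesc_lt (i + 1) (n - 1) i lam (by omega)]
  -- final value of coordinate i+1:
  have hF : ∀ i, 1 ≤ i → i ≤ n - 1 →
      coord (starDesc 1 (n - 1) lam) (i + 1) = coord (starDesc i (n - 1) lam) (i + 1) := by
    intro i hi1 hi2
    rw [starDesc_split 1 i (n - 1) lam (by omega) (by omega) (by omega),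
      coord_starDesc_gt 1 (i - 1) (i + 1) _ (by omega)]
  have hXn : coord (starDesc n (n - 1) lam) n = coord lam n := by
    rw [starDesc_of_gt n (n - 1) lam (by omega)]
  constructor
  · -- Part 1
    have e := hF (n - 1) (by omega) (by omega)
    have e' := hR2 (n - 1) (by omega) (by omega)
    rw [(by omega : n - 1 + 1 = n)] at e e'
    rw [e, e', hXn]
    split_ifs with h
    · right; ring
    · left; ring
  · -- Part 2
    intro i hi2 hiN
    obtain ⟨j, rfl⟩ : ∃ j, i = j + 1 := ⟨i - 1, by omega⟩
    have hj1 : 1 ≤ j := by omega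
    obtain ⟨m, hm, hmv⟩ := h1 j hj1 (by omega)
    have e1 : coord (starDesc 1 (n - 1) lam) (j + 1) =
        if coord lam j + coord (starDesc (j + 1) (n - 1) lam) (j + 1) = 0
        then coord lam j + 1 else coord lam j := by
      rw [hF j hj1 (by omega), hR2 j hj1 (by omega)]
    have e2 : coord (starDesc 1 (n - 1) lam) (j + 1 + 1) =
        if coord lam (j + 1) + coord (starDesc (j + 1 + 1) (n - 1) lam) (j + 1 + 1) = 0
        then coord lam (j + 1) + 1 else coord lam (j + 1) := by
      rw [hF (j + 1) (by omega) (by omega), hR2 (j + 1) (by omega) (by omega)]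
    have e3 := hR1 (j + 1) (by omega) (by omega)
    rw [e1, e2]
    by_cases c2 : coord lam (j + 1) + coord (starDesc (j + 1 + 1) (n - 1) lam) (j + 1 + 1) = 0
    · rw [if_pos c2]
      rw [if_pos c2] at e3
      by_cases c1 : coord lam j + coord (starDesc (j + 1) (n - 1) lam) (j + 1) = 0
      · rw [if_pos c1]
        exact ⟨m, hm, by linear_combination hmv⟩
      · rw [if_neg c1]
        have hm1 : (m : ℂ) ≠ 1 := by
          intro hh
          apply c1
          rw [e3]
          linear_combination hmv + c2 + hh
        have hm1' : m ≠ 1 := by intro hh; exact hm1 (by exact_mod_cast hh)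
        refine ⟨m - 1, by omega, ?_⟩
        push_cast
        linear_combination hmv
    · rw [if_neg c2]
      by_cases c1 : coord lam j + coord (starDesc (j + 1) (n - 1) lam) (j + 1) = 0
      · rw [if_pos c1]
        refine ⟨m + 1, by omega, ?_⟩
        push_cast
        linear_combination hmv
      · rw [if_neg c1]
        exact ⟨m, hm, by linear_combination hmv⟩
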